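/- Assume v₀ ≤ 0, u₀ < 0 and (1 − v₀)² + u₀ > (E_μ[θ] − v₀)². Then there exists a unique ā ∈ (0, η(1)) satisfying ∫_{θ̄}¹ (η(θ) − ā) dμ(θ) + ā − E_μ[θ] = 0, where θ̄ ∈ [s, 1] is the unique point with η(θ̄) = ā; moreover ā ∈ (0, E_μ[θ]), and the veto mechanism defined by ã*(θ) = ā, p̃*(θ) = 0 for θ < θ̄ and ã*(θ) = η(θ), p̃*(θ) = (η(θ) − ā)/(η(θ) − v₀) for θ ≥ θ̄ is optimal. -/

import Mathlib

open MeasureTheory Set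

/-- Principal's ex ante payoff from a veto mechanism `(p, a)`:
`∫ (p θ · u₀ − (1 − p θ) · (a θ − θ)²) dμ(θ)`. -/
noncomputable def vetoPayoff (μ : Measure ℝ) (u₀ : ℝ) (p a : ℝ → ℝ) : ℝ :=
  ∫ θ, (p θ * u₀ - (1 - p θ) * (a θ - θ) ^ 2) ∂μ

/-- A veto mechanism: a measurable veto probability `p : [0,1] → [0,1]` and a measurable
proposed action `a : [0,1] → [−M, M]`. -/
def IsVetoMechanism (M : ℝ) (p a : ℝ → ℝ) : Prop :=
  Measurable p ∧ Measurable a ∧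
    (∀ θ ∈ Set.Icc (0 : ℝ) 1, p θ ∈ Set.Icc (0 : ℝ) 1) ∧
    (∀ θ ∈ Set.Icc (0 : ℝ) 1, a θ ∈ Set.Icc (-M) M)

/-- Incentive compatibility of a veto mechanism: the agent's expected payoff
`p θ · v₀ + (1 − p θ) · a θ` is constant in the state. -/
def IsICVeto (v₀ : ℝ) (p a : ℝ → ℝ) : Prop :=
  ∃ vhat : ℝ, ∀ θ ∈ Set.Icc (0 : ℝ) 1, p θ * v₀ + (1 - p θ) * a θ = vhat

/-- An optimal veto mechanism: incentive compatible and weakly dominating every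
incentive-compatible veto mechanism in principal payoff. -/
def IsOptimalVeto (μ : Measure ℝ) (v₀ u₀ M : ℝ) (p a : ℝ → ℝ) : Prop :=
  IsVetoMechanism M p a ∧ IsICVeto v₀ p a ∧
    ∀ q b : ℝ → ℝ, IsVetoMechanism M q b → IsICVeto v₀ q b →
      vetoPayoff μ u₀ q b ≤ vetoPayoff μ u₀ p a

lemma aux_case1 (v₀ u₀ ab θ p a : ℝ) (hp0 : 0 ≤ p) (hp1 : p ≤ 1)
    (hkey : (θ - v₀)^2 + u₀ ≤ (ab - v₀)^2) :
    p * u₀ - (1 - p) * (a - θ)^2 ≤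
      -(ab - θ)^2 + 2*(θ - ab) * ((p*v₀ + (1-p)*a) - ab) := by
  have hid : (-(ab - θ)^2 + 2*(θ - ab) * ((p*v₀ + (1-p)*a) - ab))
      - (p * u₀ - (1 - p) * (a - θ)^2)
      = (1-p)*(a-ab)^2 + p*((ab - v₀)^2 - ((θ - v₀)^2 + u₀)) := by ring
  nlinarith [mul_nonneg (sub_nonneg.2 hp1) (sq_nonneg (a - ab)),
    mul_nonneg hp0 (sub_nonneg.2 hkey)]

lemma aux_case2 (v₀ u₀ ab θ e p a : ℝ) (hp0 : 0 ≤ p) (hp1 : p ≤ 1)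
    (he : v₀ < e) (hsq : (e - v₀)^2 = (θ - v₀)^2 + u₀) :
    p * u₀ - (1 - p) * (a - θ)^2 ≤
      ((e - ab)/(e - v₀) * u₀ - (1 - (e - ab)/(e - v₀)) * (e - θ)^2)
        + 2*(θ - e) * ((p*v₀ + (1-p)*a) - ab) := by
  have hne : e - v₀ ≠ 0 := ne_of_gt (by linarith)
  have hG : (e - ab)/(e - v₀) * u₀ - (1 - (e - ab)/(e - v₀)) * (e - θ)^2
      = u₀ + 2*(ab - v₀)*(θ - e) := by
    field_simp
    linear_combination (ab - v₀) * hsq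
  rw [hG]
  have hid : (u₀ + 2*(ab - v₀)*(θ - e) + 2*(θ - e) * ((p*v₀ + (1-p)*a) - ab))
      - (p * u₀ - (1 - p) * (a - θ)^2)
      = (1-p)*(a - e)^2 + (1-p)*((θ - v₀)^2 + u₀ - (e - v₀)^2) := by ring
  nlinarith [mul_nonneg (sub_nonneg.2 hp1) (sq_nonneg (a - e))]

lemma integrand_bound (u₀ p a θ K : ℝ) (hp0 : 0 ≤ p) (hp1 : p ≤ 1) (hK : (a - θ)^2 ≤ K) :
    |p * u₀ - (1-p)*(a-θ)^2| ≤ |u₀| + K := by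
  have h1 : 0 ≤ (1-p)*(a-θ)^2 := mul_nonneg (by linarith) (sq_nonneg _)
  have h2 : (1-p)*(a-θ)^2 ≤ K :=
    le_trans (mul_le_of_le_one_left (sq_nonneg _) (by linarith)) hK
  have h3 : p * u₀ ≤ |u₀| := by nlinarith [le_abs_self u₀, abs_nonneg u₀, neg_abs_le u₀]
  have h4 : -|u₀| ≤ p * u₀ := by nlinarith [neg_abs_le u₀, abs_nonneg u₀]
  rw [abs_le]
  constructor <;> nlinarith [sq_nonneg (a-θ)]

set_option maxHeartbeats 1000000 in
/-- **Characterization of the optimal veto mechanism (valuable case, `v₀ ≤ 0`).**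
If `v₀ ≤ 0`, `u₀ < 0` and `(1 − v₀)² + u₀ > (E_μ[θ] − v₀)²`, then there is a unique
`ā ∈ (0, η(1))` satisfying the first-order condition
`∫_{θ̄}¹ (η(θ) − ā) dμ + ā − E_μ[θ] = 0` with `θ̄ ∈ [s, 1]` the unique point where
`η(θ̄) = ā`; moreover `ā ∈ (0, E_μ[θ])`, and the veto mechanism that pools at `ā` with no
veto below `θ̄` and proposes `η(θ)` with veto probability `(η(θ) − ā)/(η(θ) − v₀)` above
`θ̄` is optimal. -/
theorem optimal_veto_characterization
    (μ : Measure ℝ) [IsProbabilityMeasure μ]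
    (hsupp : μ (Icc (0 : ℝ) 1) = 1)
    (hfull : ∀ a b : ℝ, 0 ≤ a → a < b → b ≤ 1 → 0 < μ (Ioo a b))
    (M v₀ u₀ : ℝ) (hM : 1 < M) (hv₀ : v₀ ≤ 0) (hu₀ : u₀ < 0)
    (Eμ : ℝ) (hEμ : Eμ = ∫ θ, θ ∂μ)
    (hval : (Eμ - v₀) ^ 2 < (1 - v₀) ^ 2 + u₀)
    (η : ℝ → ℝ) (hη : ∀ θ, η θ = Real.sqrt ((θ - v₀) ^ 2 + u₀) + v₀)
    (s : ℝ) (hs : s = max 0 (Real.sqrt (-u₀) + v₀)) :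
    ∃ abar θbar : ℝ,
      θbar ∈ Icc s 1 ∧ η θbar = abar ∧
      (∫ θ in Icc θbar 1, (η θ - abar) ∂μ) + abar - Eμ = 0 ∧
      abar ∈ Ioo 0 (η 1) ∧ abar ∈ Ioo 0 Eμ ∧
      (∀ a' θ' : ℝ, a' ∈ Ioo 0 (η 1) → θ' ∈ Icc s 1 → η θ' = a' →
        (∫ θ in Icc θ' 1, (η θ - a') ∂μ) + a' - Eμ = 0 → a' = abar ∧ θ' = θbar) ∧
      IsOptimalVeto μ v₀ u₀ M
        (fun θ => if θ < θbar then 0 else (η θ - abar) / (η θ - v₀))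
        (fun θ => if θ < θbar then abar else η θ) := by
  have hu₀' : (0:ℝ) ≤ -u₀ := by linarith
  have hA : 0 < (1 - v₀)^2 + u₀ := lt_of_le_of_lt (sq_nonneg _) hval
  have hae : ∀ᵐ θ ∂μ, θ ∈ Icc (0:ℝ) 1 := by
    rw [ae_iff]
    have h : {θ : ℝ | ¬ θ ∈ Icc (0:ℝ) 1} = (Icc (0:ℝ) 1)ᶜ := rfl
    rw [h]
    exact (prob_compl_eq_zero_iff measurableSet_Icc).2 hsupp
  have hres : μ.restrict (Icc (0:ℝ) 1) = μ := Measure.restrict_eq_self_of_ae_mem hae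
  have hs0 : 0 ≤ s := hs ▸ le_max_left _ _
  have hsu : Real.sqrt (-u₀) + v₀ ≤ s := hs ▸ le_max_right _ _
  have hsqrtlt : Real.sqrt (-u₀) < 1 - v₀ := by
    rw [show (1:ℝ) - v₀ = Real.sqrt ((1-v₀)^2) by rw [Real.sqrt_sq (by linarith)]]
    exact Real.sqrt_lt_sqrt hu₀' (by linarith)
  have hs1 : s < 1 := by
    rw [hs]
    exact max_lt one_pos (by linarith)
  have harg : ∀ θ, s ≤ θ → 0 ≤ (θ - v₀)^2 + u₀ := by
    intro θ hθ
    have h1 : Real.sqrt (-u₀) ≤ θ - v₀ := by linarith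
    nlinarith [Real.sq_sqrt hu₀', Real.sqrt_nonneg (-u₀)]
  have hηsq : ∀ θ, s ≤ θ → (η θ - v₀)^2 = (θ - v₀)^2 + u₀ := by
    intro θ hθ; rw [hη]; simpa using Real.sq_sqrt (harg θ hθ)
  have hηge : ∀ θ, v₀ ≤ η θ := fun θ => by
    rw [hη]; have := Real.sqrt_nonneg ((θ - v₀)^2 + u₀); linarith
  have hηle : ∀ θ, s ≤ θ → η θ ≤ θ := by
    intro θ hθ
    rw [hη]
    have h2 : Real.sqrt ((θ - v₀)^2 + u₀) ≤ Real.sqrt ((θ - v₀)^2) :=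
      Real.sqrt_le_sqrt (by linarith)
    rw [Real.sqrt_sq (by linarith)] at h2
    linarith
  have hηmono : ∀ x y, s ≤ x → x ≤ y → η x ≤ η y := by
    intro x y hx hxy
    rw [hη, hη]
    have h2 : Real.sqrt ((x - v₀)^2 + u₀) ≤ Real.sqrt ((y - v₀)^2 + u₀) :=
      Real.sqrt_le_sqrt (by nlinarith)
    linarith
  have hηsmono : ∀ x y, s ≤ x → x < y → η x < η y := by
    intro x y hx hxy
    rw [hη, hη]
    have h2 : Real.sqrt ((x - v₀)^2 + u₀) < Real.sqrt ((y - v₀)^2 + u₀) :=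
      Real.sqrt_lt_sqrt (harg x hx) (by nlinarith)
    linarith
  have hηsmall : ∀ θ, 0 ≤ θ → θ < s → η θ = v₀ := by
    intro θ h0 hθs
    have hspos : 0 < s := lt_of_le_of_lt h0 hθs
    have hX : 0 < Real.sqrt (-u₀) + v₀ := by
      rcases (lt_max_iff.1 (hs ▸ hspos)) with h | h
      · exact absurd h (lt_irrefl 0)
      · exact h
    have hseq : s = Real.sqrt (-u₀) + v₀ := by rw [hs, max_eq_right hX.le]
    have h1 : θ - v₀ < Real.sqrt (-u₀) := by rw [hseq] at hθs; linarith
    have h2 : (θ - v₀)^2 + u₀ < 0 := by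
      nlinarith [Real.sq_sqrt hu₀', Real.sqrt_nonneg (-u₀)]
    rw [hη, Real.sqrt_eq_zero'.2 (by linarith), zero_add]
  have hmax : ∀ θ, θ ∈ Icc (0:ℝ) 1 → max (η θ) 0 ≤ θ := by
    intro θ hθ
    rcases lt_or_ge θ s with h | h
    · rw [hηsmall θ hθ.1 h]; exact max_le (le_trans hv₀ hθ.1) hθ.1
    · exact max_le (hηle θ h) hθ.1
  have hηub : ∀ θ, θ ∈ Icc (0:ℝ) 1 → η θ ≤ θ := fun θ hθ =>
    le_trans (le_max_left _ _) (hmax θ hθ)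
  have hEμ0 : 0 ≤ Eμ := by
    rw [hEμ]; exact integral_nonneg_of_ae (hae.mono fun θ hθ => hθ.1)
  have hη1E : Eμ < η 1 := by
    rw [hη]
    have h2 : Eμ - v₀ < Real.sqrt ((1 - v₀)^2 + u₀) := by
      rw [show Eμ - v₀ = Real.sqrt ((Eμ - v₀)^2) from (Real.sqrt_sq (by linarith)).symm]
      exact Real.sqrt_lt_sqrt (sq_nonneg _) hval
    linarith
  have hη1pos : 0 < η 1 := lt_of_le_of_lt hEμ0 hη1E
  have hη1lt : η 1 < 1 := by
    rw [hη]
    have h2 : Real.sqrt ((1 - v₀)^2 + u₀) < Real.sqrt ((1 - v₀)^2) :=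
      Real.sqrt_lt_sqrt hA.le (by linarith)
    rw [Real.sqrt_sq (by linarith)] at h2
    linarith
  have hηs0 : η s ≤ 0 := by
    rcases max_cases 0 (Real.sqrt (-u₀) + v₀) with ⟨h1, h2⟩ | ⟨h1, h2⟩
    · rw [hs, h1, hη]
      have h3 : Real.sqrt ((0 - v₀)^2 + u₀) ≤ Real.sqrt ((0 - v₀)^2) :=
        Real.sqrt_le_sqrt (by linarith)
      rw [Real.sqrt_sq (by linarith : (0:ℝ) ≤ 0 - v₀)] at h3
      linarith
    · rw [hs, h1, hη]
      have h3 : (Real.sqrt (-u₀) + v₀ - v₀)^2 + u₀ = 0 := by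
        have := Real.sq_sqrt hu₀'
        nlinarith [this]
      rw [h3, Real.sqrt_zero, zero_add]
      linarith
  have hηc : Continuous η := by
    have h : η = fun θ => Real.sqrt ((θ - v₀)^2 + u₀) + v₀ := funext hη
    rw [h]
    exact (Real.continuous_sqrt.comp (((continuous_id.sub continuous_const).pow 2).add continuous_const)).add continuous_const
  have hηm : Measurable η := hηc.measurable
  -- integrability helper
  have hbd : ∀ (f : ℝ → ℝ), Measurable f → ∀ C : ℝ, (∀ θ ∈ Icc (0:ℝ) 1, |f θ| ≤ C) →
      Integrable f μ := by
    intro f hf C hC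
    refine Integrable.mono' (integrable_const C) hf.aestronglyMeasurable ?_
    filter_upwards [hae] with θ hθ
    simpa [Real.norm_eq_abs] using hC θ hθ
  have hIid : Integrable (fun θ : ℝ => θ) μ := by
    refine hbd _ measurable_id 1 ?_
    intro θ hθ; rw [abs_le]; exact ⟨by linarith [hθ.1], hθ.2⟩
  have hIeta : Integrable η μ := by
    refine hbd _ hηm (1 - v₀) ?_
    intro θ hθ; rw [abs_le]
    exact ⟨by linarith [hηge θ], by linarith [hηub θ hθ, hθ.2]⟩
  have hImax : ∀ a : ℝ, Integrable (fun θ => max (η θ - a) 0) μ := by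
    intro a
    refine hbd _ ((hηm.sub measurable_const).max measurable_const) (1 - v₀ + |a|) ?_
    intro θ hθ
    rw [abs_le]
    constructor
    · have h1 := le_max_right (η θ - a) 0
      have := abs_nonneg a
      linarith
    · apply max_le
      · have := neg_abs_le a
        have := hηub θ hθ
        have := hθ.2
        linarith
      · have := abs_nonneg a; linarith
  -- splitting lemmas
  have hdisj : ∀ α β γ : ℝ, Disjoint (Ico α β) (Icc β γ) := by
    intro α β γ
    exact Set.disjoint_left.2 fun x hx hx' => absurd hx'.1 (not_le.2 hx.2)
  have hsplit2 : ∀ (f : ℝ → ℝ) (α β γ : ℝ), α ≤ β → β ≤ γ → Integrable f μ →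
      ∫ θ in Icc α γ, f θ ∂μ = (∫ θ in Ico α β, f θ ∂μ) + ∫ θ in Icc β γ, f θ ∂μ := by
    intro f α β γ h1 h2 hf
    rw [← Ico_union_Icc_eq_Icc h1 h2,
      setIntegral_union (hdisj α β γ) measurableSet_Icc hf.integrableOn hf.integrableOn]
  have hsplit : ∀ (f : ℝ → ℝ) (τ : ℝ), 0 ≤ τ → τ ≤ 1 → Integrable f μ →
      ∫ θ, f θ ∂μ = (∫ θ in Ico 0 τ, f θ ∂μ) + ∫ θ in Icc τ 1, f θ ∂μ := by
    intro f τ h0 h1 hf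
    rw [← hsplit2 f 0 τ 1 h0 h1 hf]
    conv_lhs => rw [← hres]
  have hμadd : ∀ τ : ℝ, 0 ≤ τ → τ ≤ 1 →
      (μ (Ico 0 τ)).toReal + (μ (Icc τ 1)).toReal = 1 := by
    intro τ h0 h1
    have h := measure_union (μ := μ) (hdisj 0 τ 1) (measurableSet_Icc (a := τ) (b := 1))
    rw [Ico_union_Icc_eq_Icc h0 h1, hsupp] at h
    have h2 := congrArg ENNReal.toReal h
    rw [ENNReal.toReal_add (measure_ne_top μ _) (measure_ne_top μ _)] at h2
    simpa using h2.symm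
  have hμpos : ∀ α β : ℝ, 0 ≤ α → α < β → β ≤ 1 → 0 < (μ (Ioo α β)).toReal :=
    fun α β h0 h1 h2 => ENNReal.toReal_pos (hfull α β h0 h1 h2).ne' (measure_ne_top μ _)
  have hposint : ∀ (g : ℝ → ℝ) (τ ε : ℝ), 0 ≤ τ → τ < 1 → 0 < ε → Integrable g μ →
      (∀ θ ∈ Icc τ 1, ε ≤ g θ) → 0 < ∫ θ in Icc τ 1, g θ ∂μ := by
    intro g τ ε h0 h1 hε hg hlb
    have hm : 0 < (μ (Icc τ 1)).toReal := by
      refine ENNReal.toReal_pos ?_ (measure_ne_top μ _)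
      exact (lt_of_lt_of_le (hfull τ 1 h0 h1 le_rfl) (measure_mono Ioo_subset_Icc_self)).ne'
    calc (0:ℝ) < ε * (μ (Icc τ 1)).toReal := mul_pos hε hm
      _ = ∫ _ in Icc τ 1, ε ∂μ := by rw [setIntegral_const, smul_eq_mul, mul_comm, measureReal_def]
      _ ≤ ∫ θ in Icc τ 1, g θ ∂μ := by
          refine setIntegral_mono_on (integrableOn_const (measure_ne_top μ _))
            hg.integrableOn measurableSet_Icc hlb
  -- below/above comparison with a threshold
  have hbelow : ∀ (a θa θ : ℝ), 0 < a → θa ∈ Icc s 1 → η θa = a → 0 ≤ θ → θ ≤ θa →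
      η θ ≤ a := by
    intro a θa θ ha hθa hηa h0 hle
    rcases lt_or_ge θ s with h | h
    · rw [hηsmall θ h0 h]; linarith
    · rw [← hηa]; exact hηmono θ θa h hle
  have hθapos : ∀ (a θa : ℝ), 0 < a → θa ∈ Icc s 1 → η θa = a → s < θa := by
    intro a θa ha hθa hηa
    rcases lt_or_eq_of_le hθa.1 with h | h
    · exact h
    · rw [← h] at hηa; linarith [hηs0]
  -- I a = ∫ max (η θ - a) 0
  have hconv : ∀ (a θa : ℝ), 0 < a → θa ∈ Icc s 1 → η θa = a →
      (∫ θ in Icc θa 1, (η θ - a) ∂μ) = ∫ θ, max (η θ - a) 0 ∂μ := by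
    intro a θa ha hθa hηa
    have h0θa : 0 ≤ θa := le_trans hs0 hθa.1
    rw [hsplit (fun θ => max (η θ - a) 0) θa h0θa hθa.2 (hImax a)]
    have h1 : ∫ θ in Ico 0 θa, max (η θ - a) 0 ∂μ = 0 := by
      rw [setIntegral_congr_fun measurableSet_Ico
        (g := fun _ => (0:ℝ)) ?_, setIntegral_const, smul_zero]
      intro θ hθ
      have h2 : η θ ≤ a := hbelow a θa θ ha hθa hηa hθ.1 hθ.2.le
      simp [max_eq_right (by linarith : η θ - a ≤ 0)]
    have h2 : ∫ θ in Icc θa 1, max (η θ - a) 0 ∂μ = ∫ θ in Icc θa 1, (η θ - a) ∂μ := by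
      refine setIntegral_congr_fun measurableSet_Icc ?_
      intro θ hθ
      have h3 : a ≤ η θ := hηa ▸ hηmono θa θ hθa.1 hθ.1
      simp [max_eq_left (by linarith : 0 ≤ η θ - a)]
    rw [h1, h2, zero_add]
  -- Lipschitz/monotone bounds for I
  have hIlip : ∀ a b : ℝ, a ≤ b →
      (∫ θ, max (η θ - b) 0 ∂μ) ≤ (∫ θ, max (η θ - a) 0 ∂μ) ∧
      (∫ θ, max (η θ - a) 0 ∂μ) ≤ (∫ θ, max (η θ - b) 0 ∂μ) + (b - a) := by
    intro a b hab
    constructor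
    · exact integral_mono (hImax b) (hImax a)
        (fun θ => max_le_max (by linarith) le_rfl)
    · have hpt : ∀ θ : ℝ, max (η θ - a) 0 ≤ max (η θ - b) 0 + (b - a) := by
        intro θ
        apply max_le
        · have := le_max_left (η θ - b) 0; linarith
        · have := le_max_right (η θ - b) 0; linarith
      calc (∫ θ, max (η θ - a) 0 ∂μ) ≤ ∫ θ, (max (η θ - b) 0 + (b - a)) ∂μ :=
            integral_mono (hImax a) ((hImax b).add (integrable_const _)) hpt
        _ = (∫ θ, max (η θ - b) 0 ∂μ) + (b - a) := by
            rw [integral_add (hImax b) (integrable_const _), integral_const,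
              measureReal_def, measure_univ, ENNReal.toReal_one, one_smul]
  have hψcont : Continuous (fun a => (∫ θ, max (η θ - a) 0 ∂μ) + a - Eμ) := by
    have hlip : LipschitzWith 1 (fun a : ℝ => ∫ θ, max (η θ - a) 0 ∂μ) := by
      refine LipschitzWith.of_dist_le_mul ?_
      intro a b
      rw [Real.dist_eq, Real.dist_eq, NNReal.coe_one, one_mul]
      rcases le_total a b with h | h
      · rcases hIlip a b h with ⟨h1, h2⟩
        rw [abs_le]
        constructor
        · rw [abs_of_nonpos (by linarith)]; linarith
        · rw [abs_of_nonpos (by linarith)]; linarith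
      · rcases hIlip b a h with ⟨h1, h2⟩
        rw [abs_le]
        constructor
        · rw [abs_of_nonneg (by linarith)]; linarith
        · rw [abs_of_nonneg (by linarith)]; linarith
    exact (hlip.continuous.add continuous_id).sub continuous_const
  -- ψ 0 < 0
  have hI0 : (∫ θ, max (η θ - 0) 0 ∂μ) < Eμ := by
    set cc := max s (1/2 : ℝ) with hcc
    have hcc0 : (0:ℝ) ≤ cc := le_trans (by norm_num) (le_max_right _ _)
    have hcc1 : cc < 1 := max_lt hs1 (by norm_num)
    have hccs : s ≤ cc := le_max_left _ _
    have hcchalf : (1/2 : ℝ) ≤ cc := le_max_right _ _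
    set δ := min (1/2 : ℝ) (-u₀ / (2 * (1 - v₀))) with hδ
    have hδpos : 0 < δ := lt_min (by norm_num) (div_pos (by linarith) (by linarith))
    have hfint : Integrable (fun θ => θ - max (η θ) 0) μ := by
      refine hIid.sub (hbd _ (hηm.max measurable_const) (1 - v₀) ?_)
      intro θ hθ
      rw [abs_le]
      constructor
      · have := le_max_right (η θ) 0; linarith
      · exact max_le (by linarith [hηub θ hθ, hθ.2]) (by linarith)
    have hlb : ∀ θ ∈ Icc cc 1, δ ≤ θ - max (η θ) 0 := by
      intro θ hθ
      have hθs : s ≤ θ := le_trans hccs hθ.1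
      have hθh : (1/2 : ℝ) ≤ θ := le_trans hcchalf hθ.1
      have hθ1 : θ ≤ 1 := hθ.2
      rcases le_or_gt (η θ) 0 with h | h
      · rw [max_eq_right h]
        have := min_le_left (1/2 : ℝ) (-u₀ / (2 * (1 - v₀)))
        linarith
      · rw [max_eq_left h.le]
        have hsq := hηsq θ hθs
        have hle := hηle θ hθs
        have hge := hηge θ
        have key : -u₀ / (2 * (1 - v₀)) ≤ θ - η θ := by
          rw [div_le_iff₀ (by linarith)]
          nlinarith
        have := min_le_right (1/2 : ℝ) (-u₀ / (2 * (1 - v₀)))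
        linarith
    have key : 0 < ∫ θ, (θ - max (η θ) 0) ∂μ := by
      rw [hsplit _ cc hcc0 hcc1.le hfint]
      have p1 : 0 ≤ ∫ θ in Ico 0 cc, (θ - max (η θ) 0) ∂μ := by
        refine setIntegral_nonneg measurableSet_Ico ?_
        intro θ hθ
        have := hmax θ ⟨hθ.1, le_trans hθ.2.le hcc1.le⟩
        linarith
      have p2 : 0 < ∫ θ in Icc cc 1, (θ - max (η θ) 0) ∂μ :=
        hposint _ cc δ hcc0 hcc1 hδpos hfint hlb
      linarith
    have heq : ∫ θ, (θ - max (η θ) 0) ∂μ = Eμ - ∫ θ, max (η θ - 0) 0 ∂μ := by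
      rw [integral_sub hIid (by simpa using hImax 0), hEμ]
      simp
    linarith
  -- ψ (η 1) > 0
  have hψ1 : 0 < (∫ θ, max (η θ - η 1) 0 ∂μ) + η 1 - Eμ := by
    have h1 : 0 ≤ ∫ θ, max (η θ - η 1) 0 ∂μ :=
      integral_nonneg (fun θ => le_max_right _ _)
    linarith
  -- IVT for abar
  obtain ⟨abar, habmem, habroot⟩ :=
    intermediate_value_Icc (le_of_lt hη1pos) hψcont.continuousOn
      (mem_Icc.2 ⟨by simp only [sub_zero] at hI0 ⊢; linarith, hψ1.le⟩)
  have habroot : (∫ θ, max (η θ - abar) 0 ∂μ) + abar - Eμ = 0 := habroot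
  have hab0 : 0 < abar := by
    rcases lt_or_eq_of_le habmem.1 with h | h
    · exact h
    · exfalso; rw [← h] at habroot; simp only [sub_zero] at habroot hI0; linarith
  have hab1 : abar < η 1 := by
    rcases lt_or_eq_of_le habmem.2 with h | h
    · exact h
    · exfalso; rw [h] at habroot; linarith
  -- IVT for θbar
  obtain ⟨θbar, hθbmem, hθbeq⟩ :=
    intermediate_value_Icc hs1.le hηc.continuousOn
      (mem_Icc.2 ⟨le_trans hηs0 hab0.le, hab1.le⟩)
  have hsθb : s < θbar := hθapos abar θbar hab0 hθbmem hθbeq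
  have hθb0 : 0 < θbar := lt_of_le_of_lt hs0 hsθb
  have hθb1 : θbar < 1 := by
    rcases lt_or_eq_of_le hθbmem.2 with h | h
    · exact h
    · exfalso; rw [h] at hθbeq; linarith
  -- FOC
  have hFOC : (∫ θ in Icc θbar 1, (η θ - abar) ∂μ) + abar - Eμ = 0 := by
    rw [hconv abar θbar hab0 hθbmem hθbeq]; exact habroot
  -- abar < Eμ
  have habE : abar < Eμ := by
    have h1 : 0 < ∫ θ in Icc θbar 1, (η θ - abar) ∂μ := by
      set τ := (θbar + 1)/2 with hτ
      have hθτ : θbar < τ := by rw [hτ]; linarith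
      have hτ1 : τ < 1 := by rw [hτ]; linarith
      have hτ0 : 0 ≤ τ := by rw [hτ]; linarith
      have hεpos : 0 < η τ - abar := by
        have := hηsmono θbar τ hθbmem.1 hθτ
        linarith [hθbeq ▸ this]
      have hint : Integrable (fun θ => η θ - abar) μ := hIeta.sub (integrable_const _)
      rw [hsplit2 _ θbar τ 1 hθτ.le hτ1.le hint]
      have p1 : 0 ≤ ∫ θ in Ico θbar τ, (η θ - abar) ∂μ := by
        refine setIntegral_nonneg measurableSet_Ico ?_
        intro θ hθ
        have := hηmono θbar θ hθbmem.1 hθ.1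
        linarith [hθbeq ▸ this]
      have p2 : 0 < ∫ θ in Icc τ 1, (η θ - abar) ∂μ := by
        refine hposint _ τ (η τ - abar) hτ0 hτ1 hεpos hint ?_
        intro θ hθ
        have := hηmono τ θ (le_trans hθbmem.1 hθτ.le) hθ.1
        linarith
      linarith
    linarith
  -- strict monotonicity of ψ on (0, ∞) with witness
  have hstrict : ∀ (a b θa : ℝ), 0 < a → a < b → θa ∈ Icc s 1 → η θa = a →
      (∫ θ, max (η θ - a) 0 ∂μ) + a < (∫ θ, max (η θ - b) 0 ∂μ) + b := by
    intro a b θa ha hab hθa hηa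
    have hθa0 : 0 < θa := lt_of_le_of_lt hs0 (hθapos a θa ha hθa hηa)
    have hint : Integrable (fun θ => max (η θ - a) 0 - max (η θ - b) 0) μ :=
      (hImax a).sub (hImax b)
    have hD : (∫ θ, max (η θ - a) 0 ∂μ) - (∫ θ, max (η θ - b) 0 ∂μ)
        ≤ (b - a) * (μ (Icc θa 1)).toReal := by
      rw [← integral_sub (hImax a) (hImax b),
        hsplit _ θa hθa0.le hθa.2 hint]
      have p1 : (∫ θ in Ico 0 θa, (max (η θ - a) 0 - max (η θ - b) 0) ∂μ) = 0 := by
        rw [setIntegral_congr_fun measurableSet_Ico (g := fun _ => (0:ℝ)) ?_,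
          setIntegral_const, smul_zero]
        intro θ hθ
        have h2 : η θ ≤ a := hbelow a θa θ ha hθa hηa hθ.1 hθ.2.le
        simp only [max_eq_right (by linarith : η θ - a ≤ 0),
          max_eq_right (by linarith : η θ - b ≤ 0), sub_zero]
      have p2 : (∫ θ in Icc θa 1, (max (η θ - a) 0 - max (η θ - b) 0) ∂μ)
          ≤ (b - a) * (μ (Icc θa 1)).toReal := by
        have hpt : ∀ θ ∈ Icc θa 1, max (η θ - a) 0 - max (η θ - b) 0 ≤ b - a := by
          intro θ _
          apply sub_le_iff_le_add.2
          apply max_le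
          · have := le_max_left (η θ - b) 0; linarith
          · have := le_max_right (η θ - b) 0; linarith
        calc (∫ θ in Icc θa 1, (max (η θ - a) 0 - max (η θ - b) 0) ∂μ)
            ≤ ∫ _ in Icc θa 1, (b - a) ∂μ :=
              setIntegral_mono_on hint.integrableOn
                (integrableOn_const (measure_ne_top μ _))
                measurableSet_Icc hpt
          _ = (b - a) * (μ (Icc θa 1)).toReal := by
              rw [setIntegral_const, smul_eq_mul, mul_comm, measureReal_def]
      linarith
    have hμlt : (μ (Icc θa 1)).toReal < 1 := by
      have hadd := hμadd θa hθa0.le hθa.2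
      have hpos : 0 < (μ (Ico 0 θa)).toReal := by
        refine ENNReal.toReal_pos ?_ (measure_ne_top μ _)
        exact (lt_of_lt_of_le (hfull 0 θa le_rfl hθa0 hθa.2)
          (measure_mono Ioo_subset_Ico_self)).ne'
      linarith
    have hμ0 : 0 ≤ (μ (Icc θa 1)).toReal := ENNReal.toReal_nonneg
    nlinarith
  -- uniqueness
  have huniq : ∀ a' θ' : ℝ, a' ∈ Ioo 0 (η 1) → θ' ∈ Icc s 1 → η θ' = a' →
      (∫ θ in Icc θ' 1, (η θ - a') ∂μ) + a' - Eμ = 0 → a' = abar ∧ θ' = θbar := by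
    intro a' θ' ha' hθ' hη' hfoc'
    have hroot' : (∫ θ, max (η θ - a') 0 ∂μ) + a' - Eμ = 0 := by
      rw [← hconv a' θ' ha'.1 hθ' hη']; exact hfoc'
    have haa : a' = abar := by
      rcases lt_trichotomy a' abar with h | h | h
      · have := hstrict a' abar θ' ha'.1 h hθ' hη'
        exfalso; linarith
      · exact h
      · have := hstrict abar a' θbar hab0 h hθbmem hθbeq
        exfalso; linarith
    refine ⟨haa, ?_⟩
    rcases lt_trichotomy θ' θbar with h | h | h
    · have := hηsmono θ' θbar hθ'.1 h
      rw [hη', hθbeq, haa] at this; linarith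
    · exact h
    · have := hηsmono θbar θ' hθbmem.1 h
      rw [hη', hθbeq, haa] at this; linarith
  -- facts about the mechanism above the threshold
  have hfacts : ∀ θ : ℝ, θ ∈ Icc (0:ℝ) 1 → ¬ θ < θbar →
      abar ≤ η θ ∧ η θ ≤ η 1 ∧ 0 < η θ - v₀ := by
    intro θ hθ hnθ
    have hθs : s ≤ θ := le_trans hθbmem.1 (not_lt.1 hnθ)
    have h1 : abar ≤ η θ := hθbeq ▸ hηmono θbar θ hθbmem.1 (not_lt.1 hnθ)
    exact ⟨h1, hηmono θ 1 hθs hθ.2, by linarith⟩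
  have hpm : Measurable (fun θ => if θ < θbar then (0:ℝ) else (η θ - abar) / (η θ - v₀)) := by
    refine Measurable.ite ?_ measurable_const
      ((hηm.sub measurable_const).div (hηm.sub measurable_const))
    exact measurableSet_lt measurable_id measurable_const
  have ham : Measurable (fun θ => if θ < θbar then abar else η θ) := by
    refine Measurable.ite ?_ measurable_const hηm
    exact measurableSet_lt measurable_id measurable_const
  have hpr : ∀ θ ∈ Icc (0:ℝ) 1,
      (if θ < θbar then (0:ℝ) else (η θ - abar)/(η θ - v₀)) ∈ Icc (0:ℝ) 1 := by
    intro θ hθ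
    by_cases h : θ < θbar
    · rw [if_pos h]; exact ⟨le_rfl, zero_le_one⟩
    · rcases hfacts θ hθ h with ⟨h1, h2, h3⟩
      rw [if_neg h]
      constructor
      · exact div_nonneg (by linarith) (by linarith)
      · rw [div_le_one h3]; linarith
  have har : ∀ θ ∈ Icc (0:ℝ) 1,
      (if θ < θbar then abar else η θ) ∈ Icc (0:ℝ) 1 := by
    intro θ hθ
    by_cases h : θ < θbar
    · rw [if_pos h]; exact ⟨hab0.le, by linarith⟩
    · rcases hfacts θ hθ h with ⟨h1, h2, h3⟩
      rw [if_neg h]; exact ⟨by linarith, by linarith⟩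
  refine ⟨abar, θbar, hθbmem, hθbeq, hFOC, ⟨hab0, hab1⟩, ⟨hab0, habE⟩, huniq, ?_, ?_, ?_⟩
  · -- IsVetoMechanism
    refine ⟨hpm, ham, hpr, ?_⟩
    intro θ hθ
    rcases har θ hθ with ⟨h1, h2⟩
    exact ⟨by linarith, by linarith⟩
  · -- IsICVeto
    refine ⟨abar, ?_⟩
    intro θ hθ
    show (if θ < θbar then (0:ℝ) else (η θ - abar)/(η θ - v₀)) * v₀ +
      (1 - (if θ < θbar then (0:ℝ) else (η θ - abar)/(η θ - v₀))) *
        (if θ < θbar then abar else η θ) = abar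
    by_cases h : θ < θbar
    · rw [if_pos h, if_pos h]; ring
    · rcases hfacts θ hθ h with ⟨h1, h2, h3⟩
      rw [if_neg h, if_neg h]
      have hne : η θ - v₀ ≠ 0 := ne_of_gt h3
      field_simp
      ring
  · -- optimality
    intro q b hqb hic
    obtain ⟨hqm, hbm, hqr, hbr⟩ := hqb
    obtain ⟨w, hw⟩ := hic
    set c : ℝ → ℝ := fun θ => if θ < θbar then 2*(θ - abar) else 2*(θ - η θ) with hc
    set G : ℝ → ℝ := fun θ =>
      (if θ < θbar then (0:ℝ) else (η θ - abar)/(η θ - v₀)) * u₀ -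
        (1 - (if θ < θbar then (0:ℝ) else (η θ - abar)/(η θ - v₀))) *
          ((if θ < θbar then abar else η θ) - θ)^2 with hGdef
    have hcm : Measurable c := by
      refine Measurable.ite (measurableSet_lt measurable_id measurable_const) ?_ ?_
      · exact (measurable_id.sub measurable_const).const_mul 2
      · exact (measurable_id.sub hηm).const_mul 2
    have hIc : Integrable c μ := by
      refine hbd c hcm (2*(2 - v₀)) ?_
      intro θ hθ
      rw [hc]
      by_cases h : θ < θbar
      · simp only [if_pos h]
        rw [abs_le]; constructor <;> nlinarith [hθ.1, hθ.2, hab0, hab1, hη1lt]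
      · simp only [if_neg h]
        have := hηge θ
        have := hηub θ hθ
        rw [abs_le]; constructor <;> nlinarith [hθ.1, hθ.2]
    have hIG : Integrable G μ := by
      refine hbd G ?_ (|u₀| + 4) ?_
      · rw [hGdef]
        exact (hpm.mul measurable_const).sub
          ((measurable_const.sub hpm).mul ((ham.sub measurable_id).pow_const 2))
      · intro θ hθ
        rw [hGdef]
        exact integrand_bound u₀ _ _ _ 4 (hpr θ hθ).1 (hpr θ hθ).2
          (by nlinarith [(har θ hθ).1, (har θ hθ).2, hθ.1, hθ.2])
    have hIqb : Integrable (fun θ => q θ * u₀ - (1 - q θ) * (b θ - θ)^2) μ := by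
      refine hbd _ ((hqm.mul measurable_const).sub
        ((measurable_const.sub hqm).mul ((hbm.sub measurable_id).pow_const 2)))
        (|u₀| + (M+1)^2) ?_
      intro θ hθ
      exact integrand_bound u₀ _ _ _ _ (hqr θ hθ).1 (hqr θ hθ).2
        (sq_le_sq' (by linarith [(hbr θ hθ).1, hθ.2]) (by linarith [(hbr θ hθ).2, hθ.1]))
    have hFOC2 := hFOC
    have i3 : ∫ θ in Icc θbar 1, (η θ - abar) ∂μ
        = (∫ θ in Icc θbar 1, η θ ∂μ) - abar * (μ (Icc θbar 1)).toReal := by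
      rw [integral_sub hIeta.integrableOn
        (integrableOn_const (measure_ne_top μ _)), setIntegral_const, smul_eq_mul, measureReal_def]
      ring
    rw [i3] at hFOC2
    have hIcint : ∫ θ, c θ ∂μ = 0 := by
      have e1 : ∫ θ in Ico 0 θbar, c θ ∂μ = ∫ θ in Ico 0 θbar, (2*θ - 2*abar) ∂μ := by
        refine setIntegral_congr_fun measurableSet_Ico ?_
        intro θ hθ; rw [hc]; simp only [if_pos hθ.2]; ring
      have e2 : ∫ θ in Icc θbar 1, c θ ∂μ = ∫ θ in Icc θbar 1, (2*θ - 2*η θ) ∂μ := by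
        refine setIntegral_congr_fun measurableSet_Icc ?_
        intro θ hθ; rw [hc]; simp only [if_neg (not_lt.2 hθ.1)]; ring
      have i1 : ∫ θ in Ico 0 θbar, (2*θ - 2*abar) ∂μ
          = 2*(∫ θ in Ico 0 θbar, θ ∂μ) - 2*abar*(μ (Ico 0 θbar)).toReal := by
        rw [integral_sub ((hIid.const_mul 2).integrableOn)
          (integrableOn_const (measure_ne_top μ _)),
          integral_const_mul, setIntegral_const, smul_eq_mul, measureReal_def]
        ring
      have i2 : ∫ θ in Icc θbar 1, (2*θ - 2*η θ) ∂μ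
          = 2*(∫ θ in Icc θbar 1, θ ∂μ) - 2*(∫ θ in Icc θbar 1, η θ ∂μ) := by
        rw [integral_sub ((hIid.const_mul 2).integrableOn)
          ((hIeta.const_mul 2).integrableOn), integral_const_mul, integral_const_mul]
      have i4 : Eμ = (∫ θ in Ico 0 θbar, θ ∂μ) + ∫ θ in Icc θbar 1, θ ∂μ := by
        rw [hEμ]; exact hsplit _ θbar hθb0.le hθb1.le hIid
      have i5 := hμadd θbar hθb0.le hθb1.le
      have i6 : abar * (μ (Ico 0 θbar)).toReal + abar * (μ (Icc θbar 1)).toReal = abar := by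
        have := congrArg (fun x => abar * x) i5
        simp only [mul_one] at this
        linarith [mul_add abar (μ (Ico 0 θbar)).toReal (μ (Icc θbar 1)).toReal ▸ this]
      rw [hsplit c θbar hθb0.le hθb1.le hIc, e1, e2, i1, i2]
      linarith
    have hptw : ∀ᵐ θ ∂μ, q θ * u₀ - (1 - q θ) * (b θ - θ)^2 ≤ G θ + c θ * (w - abar) := by
      filter_upwards [hae] with θ hθ
      have hq := hqr θ hθ
      have hwθ := hw θ hθ
      rw [hGdef, hc]
      by_cases h : θ < θbar
      · simp only [if_pos h]
        have hkey : (θ - v₀)^2 + u₀ ≤ (abar - v₀)^2 := by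
          have h1 := hηsq θbar hθbmem.1
          rw [hθbeq] at h1
          nlinarith [hθ.1, hθ.2, h.le, hθbmem.2]
        have h2 := aux_case1 v₀ u₀ abar θ (q θ) (b θ) hq.1 hq.2 hkey
        rw [hwθ] at h2
        nlinarith [h2]
      · simp only [if_neg h]
        have hθs : s ≤ θ := le_trans hθbmem.1 (not_lt.1 h)
        rcases hfacts θ hθ h with ⟨h1, _, h3⟩
        have h2 := aux_case2 v₀ u₀ abar θ (η θ) (q θ) (b θ) hq.1 hq.2
          (by linarith) (hηsq θ hθs)
        rw [hwθ] at h2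
        nlinarith [h2]
    calc vetoPayoff μ u₀ q b
        ≤ ∫ θ, (G θ + c θ * (w - abar)) ∂μ :=
          integral_mono_ae hIqb (hIG.add (hIc.mul_const _)) hptw
      _ = (∫ θ, G θ ∂μ) + (∫ θ, c θ ∂μ) * (w - abar) := by
          rw [integral_add hIG (hIc.mul_const _), integral_mul_const]
      _ = ∫ θ, G θ ∂μ := by rw [hIcint, zero_mul, add_zero]
      _ = vetoPayoff μ u₀ (fun θ => if θ < θbar then 0 else (η θ - abar) / (η θ - v₀))
            (fun θ => if θ < θbar then abar else η θ) := by
          rw [hGdef]; rfl
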